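/- Let (X, μ_X) and (Y, μ_Y) be probability spaces and let f : X×Y → [−1,1] be measurable with ‖f‖_{□²} ≥ η for some η > 0. Then there exist measurable sets A ⊆ X and B ⊆ Y such that |∫_X ∫_Y 1_A(x) 1_B(y) f(x,y) dμ_X(x) dμ_Y(y)| ≥ η⁴/4. -/

import Mathlib

open MeasureTheory

noncomputable def boxNorm {X Y : Type*} [MeasurableSpace X] [MeasurableSpace Y]
    (μX : Measure X) (μY : Measure Y) (f : X × Y → ℝ) : ℝ :=
  (∫ x, ∫ x', ∫ y, ∫ y',
      f (x, y) * f (x, y') * f (x', y) * f (x', y') ∂μY ∂μY ∂μX ∂μX) ^ ((1 : ℝ) / 4)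

lemma abs_mul4_le_one {a b c d : ℝ} (ha : |a| ≤ 1) (hb : |b| ≤ 1) (hc : |c| ≤ 1)
    (hd : |d| ≤ 1) : |a * b * c * d| ≤ 1 := by
  rw [abs_mul, abs_mul, abs_mul]
  exact mul_le_one₀ (mul_le_one₀ (mul_le_one₀ ha (abs_nonneg b) hb) (abs_nonneg c) hc)
    (abs_nonneg d) hd

lemma integrable_of_abs_le_one {α : Type*} [MeasurableSpace α] {μ : Measure α}
    [IsFiniteMeasure μ] {g : α → ℝ} (hg : Measurable g) (h : ∀ a, |g a| ≤ 1) :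
    Integrable g μ :=
  ⟨hg.aestronglyMeasurable, HasFiniteIntegral.of_bounded (C := 1)
    (Filter.Eventually.of_forall (fun a => by simpa using h a))⟩

lemma abs_integral_le_one {α : Type*} [MeasurableSpace α] (μ : Measure α)
    [IsProbabilityMeasure μ] {g : α → ℝ} (h : ∀ a, |g a| ≤ 1) :
    |∫ a, g a ∂μ| ≤ 1 := by
  have := norm_integral_le_of_norm_le_const (μ := μ) (f := g) (C := 1)
    (Filter.Eventually.of_forall (fun a => by simpa using h a))
  simpa using this

lemma int_uncurry {α β : Type*} [MeasurableSpace α] [MeasurableSpace β]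
    (μ : Measure α) (ν : Measure β) [IsProbabilityMeasure μ] [IsProbabilityMeasure ν]
    {g : α → β → ℝ} (hg : Measurable (fun p : α × β => g p.1 p.2))
    (hb : ∀ a b, |g a b| ≤ 1) : Integrable (Function.uncurry g) (μ.prod ν) :=
  integrable_of_abs_le_one hg (fun p => hb p.1 p.2)

lemma halving {α : Type*} [MeasurableSpace α] (μ : Measure α) {g : α → ℝ}
    (hg : Integrable g μ) (hgm : Measurable g) {c : ℝ} (hc : c ≤ ∫ x, |g x| ∂μ) :
    ∃ A : Set α, MeasurableSet A ∧ c / 2 ≤ |∫ x in A, g x ∂μ| := by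
  set A := {x | 0 ≤ g x} with hAdef
  have hA : MeasurableSet A := measurableSet_le measurable_const hgm
  have h1 : ∫ x in A, |g x| ∂μ = ∫ x in A, g x ∂μ :=
    setIntegral_congr_fun hA (fun x hx => abs_of_nonneg hx)
  have h2 : ∫ x in Aᶜ, |g x| ∂μ = - ∫ x in Aᶜ, g x ∂μ := by
    rw [← integral_neg]
    exact setIntegral_congr_fun hA.compl (fun x hx => abs_of_neg (lt_of_not_ge hx))
  have h3 : ∫ x in A, |g x| ∂μ + ∫ x in Aᶜ, |g x| ∂μ = ∫ x, |g x| ∂μ :=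
    integral_add_compl hA hg.abs
  rcases le_or_gt (c / 2) (∫ x in A, g x ∂μ) with h | h
  · exact ⟨A, hA, h.trans (le_abs_self _)⟩
  · refine ⟨Aᶜ, hA.compl, ?_⟩
    have : c / 2 ≤ - ∫ x in Aᶜ, g x ∂μ := by linarith
    exact this.trans (neg_le_abs _)

theorem correlation_of_large_box_norm {X Y : Type*}
    [MeasurableSpace X] [MeasurableSpace Y]
    (μX : Measure X) (μY : Measure Y)
    [IsProbabilityMeasure μX] [IsProbabilityMeasure μY]
    (f : X × Y → ℝ) (hf : Measurable f)
    (hf1 : ∀ p, f p ∈ Set.Icc (-1 : ℝ) 1)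
    (η : ℝ) (hη : 0 < η) (hbox : η ≤ boxNorm μX μY f) :
    ∃ (A : Set X) (B : Set Y), MeasurableSet A ∧ MeasurableSet B ∧
      η ^ 4 / 4 ≤
        |∫ x, ∫ y, A.indicator (fun _ => (1 : ℝ)) x *
            B.indicator (fun _ => (1 : ℝ)) y * f (x, y) ∂μY ∂μX| := by
  classical
  have hb : ∀ p, |f p| ≤ 1 := fun p => abs_le.mpr ⟨(hf1 p).1, (hf1 p).2⟩
  have hbP : ∀ (x x' : X) (y y' : Y),
      |f (x, y) * f (x, y') * f (x', y) * f (x', y')| ≤ 1 :=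
    fun x x' y y' => abs_mul4_le_one (hb _) (hb _) (hb _) (hb _)
  unfold boxNorm at hbox
  set I : ℝ := ∫ x, ∫ x', ∫ y, ∫ y',
      f (x, y) * f (x, y') * f (x', y) * f (x', y') ∂μY ∂μY ∂μX ∂μX with hIdef
  -- step 1 : η ^ 4 ≤ I
  have key : ∀ x x' : X,
      (∫ y, ∫ y', f (x, y) * f (x, y') * f (x', y) * f (x', y') ∂μY ∂μY)
      = (∫ y, f (x, y) * f (x', y) ∂μY) ^ 2 := by
    intro x x'
    have e1 : ∀ y : Y, (∫ y', f (x, y) * f (x, y') * f (x', y) * f (x', y') ∂μY)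
        = (f (x, y) * f (x', y)) * ∫ y', f (x, y') * f (x', y') ∂μY := by
      intro y
      rw [← integral_const_mul]
      congr 1; funext y'; ring
    simp_rw [e1]
    rw [integral_mul_const, sq]
  have h0 : 0 ≤ I := integral_nonneg fun x => integral_nonneg fun x' => by
    rw [key x x']; positivity
  have hI4 : η ^ 4 ≤ I := by
    have h1 : η ^ 4 ≤ (I ^ ((1 : ℝ) / 4)) ^ 4 := pow_le_pow_left₀ hη.le hbox 4
    calc η ^ 4 ≤ (I ^ ((1 : ℝ) / 4)) ^ 4 := h1
      _ = I := by
        rw [← Real.rpow_natCast (I ^ ((1 : ℝ) / 4)) 4, ← Real.rpow_mul h0]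
        norm_num
  -- step 2 : Fubini reorganization
  have hbQ : ∀ x x' : X,
      |∫ y, ∫ y', f (x, y) * f (x, y') * f (x', y) * f (x', y') ∂μY ∂μY| ≤ 1 :=
    fun x x' => abs_integral_le_one μY fun y => abs_integral_le_one μY fun y' =>
      hbP x x' y y'
  have MQ : Measurable fun p : X × X =>
      ∫ y, ∫ y', f (p.1, y) * f (p.1, y') * f (p.2, y) * f (p.2, y') ∂μY ∂μY := by
    have sm1 : StronglyMeasurable fun q : ((X × X) × Y) × Y =>
        f (q.1.1.1, q.1.2) * f (q.1.1.1, q.2) * f (q.1.1.2, q.1.2) * f (q.1.1.2, q.2) := by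
      apply Measurable.stronglyMeasurable; fun_prop
    exact sm1.integral_prod_right'.integral_prod_right'.measurable
  have E1 : I = ∫ x', ∫ x, ∫ y, ∫ y',
      f (x, y) * f (x, y') * f (x', y) * f (x', y') ∂μY ∂μY ∂μX ∂μX := by
    rw [hIdef]
    exact integral_integral_swap
      (f := fun x x' => ∫ y, ∫ y', f (x, y) * f (x, y') * f (x', y) * f (x', y') ∂μY ∂μY)
      (int_uncurry μX μX MQ hbQ)
  have E2 : ∀ x x' : X,
      (∫ y, ∫ y', f (x, y) * f (x, y') * f (x', y) * f (x', y') ∂μY ∂μY)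
      = ∫ y', ∫ y, f (x, y) * f (x, y') * f (x', y) * f (x', y') ∂μY ∂μY := by
    intro x x'
    exact integral_integral_swap
      (f := fun y y' => f (x, y) * f (x, y') * f (x', y) * f (x', y'))
      (int_uncurry μY μY (by fun_prop) (fun y y' => hbP x x' y y'))
  have E3 : ∀ x' : X,
      (∫ x, ∫ y', ∫ y, f (x, y) * f (x, y') * f (x', y) * f (x', y') ∂μY ∂μY ∂μX)
      = ∫ y', ∫ x, ∫ y, f (x, y) * f (x, y') * f (x', y) * f (x', y') ∂μY ∂μX ∂μY := by
    intro x'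
    refine integral_integral_swap
      (f := fun x y' => ∫ y, f (x, y) * f (x, y') * f (x', y) * f (x', y') ∂μY)
      (int_uncurry μX μY ?_ ?_)
    · have sm : StronglyMeasurable fun q : (X × Y) × Y =>
          f (q.1.1, q.2) * f (q.1.1, q.1.2) * f (x', q.2) * f (x', q.1.2) := by
        apply Measurable.stronglyMeasurable; fun_prop
      exact sm.integral_prod_right'.measurable
    · intro x y'
      exact abs_integral_le_one μY fun y => hbP x x' y y'
  have E4 : I = ∫ x', ∫ y', ∫ x, ∫ y,
      f (x, y) * f (x, y') * f (x', y) * f (x', y') ∂μY ∂μX ∂μY ∂μX := by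
    rw [E1]
    congr 1; funext x'
    simp_rw [E2]
    exact E3 x'
  have hFm : Measurable fun q : X × Y =>
      ∫ x, ∫ y, f (x, y) * f (x, q.2) * f (q.1, y) * f (q.1, q.2) ∂μY ∂μX := by
    have sm : StronglyMeasurable fun q : ((X × Y) × X) × Y =>
        f (q.1.2, q.2) * f (q.1.2, q.1.1.2) * f (q.1.1.1, q.2) * f (q.1.1.1, q.1.1.2) := by
      apply Measurable.stronglyMeasurable; fun_prop
    exact sm.integral_prod_right'.integral_prod_right'.measurable
  have hFi : Integrable (fun q : X × Y =>
      ∫ x, ∫ y, f (x, y) * f (x, q.2) * f (q.1, y) * f (q.1, q.2) ∂μY ∂μX) (μX.prod μY) :=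
    integrable_of_abs_le_one hFm fun q =>
      abs_integral_le_one μX fun x => abs_integral_le_one μY fun y => hbP x q.1 y q.2
  have E5 : I = ∫ q : X × Y,
      (∫ x, ∫ y, f (x, y) * f (x, q.2) * f (q.1, y) * f (q.1, q.2) ∂μY ∂μX)
        ∂(μX.prod μY) := by
    rw [E4]
    exact integral_integral
      (f := fun x' y' => ∫ x, ∫ y, f (x, y) * f (x, y') * f (x', y) * f (x', y') ∂μY ∂μX)
      hFi
  obtain ⟨q₀, hq₀⟩ := exists_integral_le hFi
  obtain ⟨x₀, y₀⟩ := q₀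
  dsimp only at hq₀
  have hP : η ^ 4 ≤ ∫ x, ∫ y,
      f (x, y) * f (x, y₀) * f (x₀, y) * f (x₀, y₀) ∂μY ∂μX := by
    calc η ^ 4 ≤ I := hI4
      _ = _ := E5
      _ ≤ _ := hq₀
  -- step 3 : peel off to a set A
  have hgm : Measurable fun x => ∫ y, f (x, y) * f (x₀, y) ∂μY := by
    have sm : StronglyMeasurable fun q : X × Y => f (q.1, q.2) * f (x₀, q.2) := by
      apply Measurable.stronglyMeasurable; fun_prop
    exact sm.integral_prod_right'.measurable
  have hgb : ∀ x, |∫ y, f (x, y) * f (x₀, y) ∂μY| ≤ 1 := fun x =>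
    abs_integral_le_one μY fun y => by
      rw [abs_mul]; exact mul_le_one₀ (hb _) (abs_nonneg _) (hb _)
  have e2 : ∀ x, (∫ y, f (x, y) * f (x, y₀) * f (x₀, y) * f (x₀, y₀) ∂μY)
      = (f (x, y₀) * f (x₀, y₀)) * ∫ y, f (x, y) * f (x₀, y) ∂μY := by
    intro x; rw [← integral_const_mul]; congr 1; funext y; ring
  have hub : ∀ x : X, |f (x, y₀) * f (x₀, y₀)| ≤ 1 := fun x => by
    rw [abs_mul]; exact mul_le_one₀ (hb _) (abs_nonneg _) (hb _)
  have step1 : η ^ 4 ≤ ∫ x, |∫ y, f (x, y) * f (x₀, y) ∂μY| ∂μX := by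
    refine hP.trans ?_
    calc (∫ x, ∫ y, f (x, y) * f (x, y₀) * f (x₀, y) * f (x₀, y₀) ∂μY ∂μX)
        = ∫ x, (f (x, y₀) * f (x₀, y₀)) * ∫ y, f (x, y) * f (x₀, y) ∂μY ∂μX := by
          simp_rw [e2]
      _ ≤ ∫ x, |∫ y, f (x, y) * f (x₀, y) ∂μY| ∂μX := by
          refine integral_mono ?_ ?_ ?_
          · refine integrable_of_abs_le_one ?_ ?_
            · exact (by fun_prop : Measurable fun x : X => f (x, y₀) * f (x₀, y₀)).mul hgm
            · intro x
              rw [abs_mul]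
              exact mul_le_one₀ (hub x) (abs_nonneg _) (hgb x)
          · exact (integrable_of_abs_le_one hgm hgb).abs
          · intro x
            refine (le_abs_self _).trans ?_
            rw [abs_mul]
            exact mul_le_of_le_one_left (abs_nonneg _) (hub x)
  obtain ⟨A, hA, hA2⟩ := halving μX (integrable_of_abs_le_one hgm hgb) hgm step1
  -- step 4 : peel off to a set B
  have hIAm : Measurable (A.indicator fun _ => (1 : ℝ)) := measurable_const.indicator hA
  have hIAb : ∀ x, |A.indicator (fun _ => (1 : ℝ)) x| ≤ 1 := fun x => by
    by_cases hx : x ∈ A <;> simp [hx]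
  have intgr : Integrable (Function.uncurry fun x y =>
      A.indicator (fun _ => (1 : ℝ)) x * (f (x, y) * f (x₀, y))) (μX.prod μY) := by
    refine int_uncurry μX μY ?_ ?_
    · fun_prop
    · intro x y
      rw [abs_mul]
      refine mul_le_one₀ (hIAb x) (abs_nonneg _) ?_
      rw [abs_mul]
      exact mul_le_one₀ (hb _) (abs_nonneg _) (hb _)
  have E6 : (∫ x in A, (∫ y, f (x, y) * f (x₀, y) ∂μY) ∂μX)
      = ∫ y, (∫ x, A.indicator (fun _ => (1 : ℝ)) x * f (x, y) ∂μX) * f (x₀, y) ∂μY := by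
    rw [← integral_indicator hA]
    have e : ∀ x, A.indicator (fun x => ∫ y, f (x, y) * f (x₀, y) ∂μY) x
        = ∫ y, A.indicator (fun _ => (1 : ℝ)) x * (f (x, y) * f (x₀, y)) ∂μY := by
      intro x; by_cases hx : x ∈ A <;> simp [hx]
    calc (∫ x, A.indicator (fun x => ∫ y, f (x, y) * f (x₀, y) ∂μY) x ∂μX)
        = ∫ x, ∫ y, A.indicator (fun _ => (1 : ℝ)) x * (f (x, y) * f (x₀, y)) ∂μY ∂μX := by
          simp_rw [e]
      _ = ∫ y, ∫ x, A.indicator (fun _ => (1 : ℝ)) x * (f (x, y) * f (x₀, y)) ∂μX ∂μY :=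
          integral_integral_swap
            (f := fun x y => A.indicator (fun _ => (1 : ℝ)) x * (f (x, y) * f (x₀, y)))
            intgr
      _ = ∫ y, (∫ x, A.indicator (fun _ => (1 : ℝ)) x * f (x, y) ∂μX) * f (x₀, y) ∂μY := by
          congr 1; funext y
          rw [← integral_mul_const]
          congr 1; funext x; ring
  have hhm : Measurable fun y => ∫ x, A.indicator (fun _ => (1 : ℝ)) x * f (x, y) ∂μX := by
    have sm : StronglyMeasurable fun q : Y × X =>
        A.indicator (fun _ => (1 : ℝ)) q.2 * f (q.2, q.1) := by
      apply Measurable.stronglyMeasurable; fun_prop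
    exact sm.integral_prod_right'.measurable
  have hhb : ∀ y, |∫ x, A.indicator (fun _ => (1 : ℝ)) x * f (x, y) ∂μX| ≤ 1 := fun y =>
    abs_integral_le_one μX fun x => by
      rw [abs_mul]; exact mul_le_one₀ (hIAb x) (abs_nonneg _) (hb _)
  have step2 : η ^ 4 / 2 ≤
      ∫ y, |∫ x, A.indicator (fun _ => (1 : ℝ)) x * f (x, y) ∂μX| ∂μY := by
    rw [E6] at hA2
    refine hA2.trans ?_
    calc |∫ y, (∫ x, A.indicator (fun _ => (1 : ℝ)) x * f (x, y) ∂μX) * f (x₀, y) ∂μY|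
        ≤ ∫ y, |∫ x, A.indicator (fun _ => (1 : ℝ)) x * f (x, y) ∂μX| * |f (x₀, y)| ∂μY :=
          by
          have habs := norm_integral_le_integral_norm (μ := μY)
            (f := fun y => (∫ x, A.indicator (fun _ => (1 : ℝ)) x * f (x, y) ∂μX) * f (x₀, y))
          simpa [Real.norm_eq_abs, abs_mul] using habs
      _ ≤ ∫ y, |∫ x, A.indicator (fun _ => (1 : ℝ)) x * f (x, y) ∂μX| ∂μY := by
          refine integral_mono ?_ ?_ ?_
          · refine integrable_of_abs_le_one ?_ ?_
            · exact hhm.abs.mul ((hf.comp (measurable_const.prodMk measurable_id)).abs)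
            · intro y
              rw [abs_mul, abs_abs, abs_abs]
              exact mul_le_one₀ (hhb y) (abs_nonneg _) (hb _)
          · exact (integrable_of_abs_le_one hhm hhb).abs
          · intro y
            dsimp only
            exact mul_le_of_le_one_right (abs_nonneg _) (hb _)
  obtain ⟨B, hB, hB2⟩ := halving μY (integrable_of_abs_le_one hhm hhb) hhm step2
  have hB2' : η ^ 4 / 4 ≤
      |∫ y in B, (∫ x, A.indicator (fun _ => (1 : ℝ)) x * f (x, y) ∂μX) ∂μY| := by
    have : η ^ 4 / 2 / 2 = η ^ 4 / 4 := by ring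
    rwa [this] at hB2
  have intgr2 : Integrable (Function.uncurry fun y x =>
      A.indicator (fun _ => (1 : ℝ)) x * B.indicator (fun _ => (1 : ℝ)) y * f (x, y))
      (μY.prod μX) := by
    refine int_uncurry μY μX ?_ ?_
    · exact ((hIAm.comp measurable_snd).mul
        ((measurable_const.indicator hB).comp measurable_fst)).mul
        (hf.comp (measurable_snd.prodMk measurable_fst))
    · intro y x
      rw [abs_mul, abs_mul]
      refine mul_le_one₀ (mul_le_one₀ (hIAb x) (abs_nonneg _) ?_) (abs_nonneg _) (hb _)
      by_cases hy : y ∈ B <;> simp [hy]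
  have E7 : (∫ y in B, (∫ x, A.indicator (fun _ => (1 : ℝ)) x * f (x, y) ∂μX) ∂μY)
      = ∫ x, ∫ y, A.indicator (fun _ => (1 : ℝ)) x *
          B.indicator (fun _ => (1 : ℝ)) y * f (x, y) ∂μY ∂μX := by
    rw [← integral_indicator hB]
    have e : ∀ y, B.indicator
        (fun y => ∫ x, A.indicator (fun _ => (1 : ℝ)) x * f (x, y) ∂μX) y
        = ∫ x, A.indicator (fun _ => (1 : ℝ)) x *
            B.indicator (fun _ => (1 : ℝ)) y * f (x, y) ∂μX := by
      intro y; by_cases hy : y ∈ B <;> simp [hy, mul_assoc]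
    calc (∫ y, B.indicator
          (fun y => ∫ x, A.indicator (fun _ => (1 : ℝ)) x * f (x, y) ∂μX) y ∂μY)
        = ∫ y, ∫ x, A.indicator (fun _ => (1 : ℝ)) x *
            B.indicator (fun _ => (1 : ℝ)) y * f (x, y) ∂μX ∂μY := by
          simp_rw [e]
      _ = ∫ x, ∫ y, A.indicator (fun _ => (1 : ℝ)) x *
            B.indicator (fun _ => (1 : ℝ)) y * f (x, y) ∂μY ∂μX :=
          integral_integral_swap
            (f := fun y x => A.indicator (fun _ => (1 : ℝ)) x *
              B.indicator (fun _ => (1 : ℝ)) y * f (x, y)) intgr2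
  exact ⟨A, B, hA, hB, by rw [← E7]; exact hB2'⟩
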